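/- One-step mean-variance minimization lemma: let S ∈ ℝ^{n×n} be symmetric positive definite, γ ∈ ℝⁿ, μ > 0, and c ∈ ℝ. For every square-integrable ℝⁿ-valued random vector π on a probability space, E[ μ·πᵀSπ − γᵀπ + μ·(c + γᵀ(π − E[π]))² ] ≥ μc² − (γᵀS⁻¹γ)/(4μ), and equality holds for the constant random vector π ≡ (1/(2μ))·S⁻¹γ. -/

import Mathlib

open MeasureTheory Matrix

private lemma symdot {n : ℕ} {S : Matrix (Fin n) (Fin n) ℝ} (hS : S.IsHermitian)
    (x y : Fin n → ℝ) : x ⬝ᵥ (S *ᵥ y) = y ⬝ᵥ (S *ᵥ x) := by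
  simp only [dotProduct, mulVec, dotProduct, Finset.mul_sum]
  rw [Finset.sum_comm]
  refine Finset.sum_congr rfl fun i _ => Finset.sum_congr rfl fun j _ => ?_
  have h : S j i = S i j := by
    have := hS.apply i j
    simpa using this
  rw [h]; ring

private lemma quad_lb {n : ℕ} {S : Matrix (Fin n) (Fin n) ℝ} (hS : S.PosDef)
    (γ : Fin n → ℝ) {μ : ℝ} (hμ : 0 < μ) (x : Fin n → ℝ) :
    - (γ ⬝ᵥ (S⁻¹ *ᵥ γ) / (4 * μ)) ≤ μ * (x ⬝ᵥ (S *ᵥ x)) - γ ⬝ᵥ x := by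
  set u : Fin n → ℝ := S⁻¹ *ᵥ γ with hu_def
  have hu : S *ᵥ u = γ := by
    rw [hu_def, mulVec_mulVec, Matrix.mul_nonsing_inv _ hS.det_pos.ne'.isUnit, one_mulVec]
  set p : Fin n → ℝ := (1 / (2 * μ)) • u with hp_def
  have h0 : 0 ≤ (x - p) ⬝ᵥ (S *ᵥ (x - p)) := by
    have := hS.posSemidef.dotProduct_mulVec_nonneg (x - p)
    simpa using this
  have hSp : S *ᵥ p = (1 / (2 * μ)) • γ := by rw [hp_def, mulVec_smul, hu]
  have hexp : (x - p) ⬝ᵥ (S *ᵥ (x - p))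
      = x ⬝ᵥ (S *ᵥ x) - (1 / μ) * (γ ⬝ᵥ x) + (1 / (4 * μ ^ 2)) * (γ ⬝ᵥ u) := by
    rw [mulVec_sub, sub_dotProduct, dotProduct_sub, dotProduct_sub, hSp]
    rw [symdot hS.1 p x, hSp]
    rw [dotProduct_smul, dotProduct_smul, hp_def, smul_dotProduct, dotProduct_comm x γ,
      dotProduct_comm u γ]
    simp only [smul_eq_mul]
    field_simp
    ring
  rw [hexp] at h0
  have key : μ * (x ⬝ᵥ (S *ᵥ x) - (1 / μ) * (γ ⬝ᵥ x) + (1 / (4 * μ ^ 2)) * (γ ⬝ᵥ u))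
      = μ * (x ⬝ᵥ (S *ᵥ x)) - γ ⬝ᵥ x + γ ⬝ᵥ u / (4 * μ) := by
    field_simp
  have h1 := mul_nonneg hμ.le h0
  rw [key] at h1
  linarith

private lemma l2_mul_integrable {Ω : Type*} [MeasurableSpace Ω] {P : Measure Ω}
    {f g : Ω → ℝ} (hf : MemLp f 2 P) (hg : MemLp g 2 P) :
    Integrable (fun ω => f ω * g ω) P := by
  have h1 := (hf.add hg).integrable_sq
  have h2 := hf.integrable_sq
  have h3 := hg.integrable_sq
  have h : Integrable (fun ω => (((f + g) ω) ^ 2 - f ω ^ 2 - g ω ^ 2) / 2) P :=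
    ((h1.sub h2).sub h3).div_const 2
  refine h.congr (Filter.Eventually.of_forall fun ω => ?_)
  simp only [Pi.add_apply]
  ring

theorem one_step_mean_variance_min {Ω : Type*} [MeasurableSpace Ω]
    (P : Measure Ω) [IsProbabilityMeasure P]
    (n : ℕ) (hn : 1 ≤ n) (S : Matrix (Fin n) (Fin n) ℝ) (hS : S.PosDef)
    (γ : Fin n → ℝ) (μ c : ℝ) (hμ : 0 < μ) :
    (∀ π : Ω → Fin n → ℝ, MemLp π 2 P →
      μ * c ^ 2 - γ ⬝ᵥ (S⁻¹ *ᵥ γ) / (4 * μ) ≤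
        ∫ ω, (μ * (π ω ⬝ᵥ (S *ᵥ π ω)) - γ ⬝ᵥ π ω
          + μ * (c + γ ⬝ᵥ (fun i => π ω i - ∫ ω', π ω' i ∂P)) ^ 2) ∂P) ∧
    (∫ ω, (μ * (((1 / (2 * μ)) • (S⁻¹ *ᵥ γ)) ⬝ᵥ (S *ᵥ ((1 / (2 * μ)) • (S⁻¹ *ᵥ γ))))
          - γ ⬝ᵥ ((1 / (2 * μ)) • (S⁻¹ *ᵥ γ))
          + μ * (c + γ ⬝ᵥ (fun i => ((1 / (2 * μ)) • (S⁻¹ *ᵥ γ)) i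
              - ∫ _ω', ((1 / (2 * μ)) • (S⁻¹ *ᵥ γ)) i ∂P)) ^ 2) ∂P
      = μ * c ^ 2 - γ ⬝ᵥ (S⁻¹ *ᵥ γ) / (4 * μ)) := by
  have hu : S *ᵥ (S⁻¹ *ᵥ γ) = γ := by
    rw [mulVec_mulVec, Matrix.mul_nonsing_inv _ hS.det_pos.ne'.isUnit, one_mulVec]
  constructor
  · intro π hπ
    set m : Fin n → ℝ := fun i => ∫ ω, π ω i ∂P with hm_def
    have hcomp : ∀ i, MemLp (fun ω => π ω i) 2 P := fun i =>
      (ContinuousLinearMap.proj (R := ℝ) (φ := fun _ : Fin n => ℝ) i).comp_memLp' hπ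
    have hint : ∀ i, Integrable (fun ω => π ω i) P := fun i =>
      (hcomp i).integrable one_le_two
    -- integrability of quadratic form
    have hQ : Integrable (fun ω => π ω ⬝ᵥ (S *ᵥ π ω)) P := by
      have heq : ∀ ω, π ω ⬝ᵥ (S *ᵥ π ω) = ∑ i, ∑ j, S i j * (π ω i * π ω j) := by
        intro ω
        simp only [dotProduct, mulVec, dotProduct, Finset.mul_sum]
        exact Finset.sum_congr rfl fun i _ => Finset.sum_congr rfl fun j _ => by ring
      simp only [heq]
      refine integrable_finset_sum _ fun i _ => integrable_finset_sum _ fun j _ => ?_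
      exact (l2_mul_integrable (hcomp i) (hcomp j)).const_mul _
    have hL : Integrable (fun ω => γ ⬝ᵥ π ω) P := by
      simp only [dotProduct]
      exact integrable_finset_sum _ fun i _ => (hint i).const_mul _
    -- MemLp of the linear part and of Y
    have hLm : MemLp (fun ω => γ ⬝ᵥ π ω) 2 P := by
      simp only [dotProduct]
      exact memLp_finsetSum _ fun i _ => (hcomp i).const_mul _
    set Y : Ω → ℝ := fun ω => γ ⬝ᵥ π ω - γ ⬝ᵥ m with hY_def
    have hYrw : ∀ ω, γ ⬝ᵥ (fun i => π ω i - ∫ ω', π ω' i ∂P) = Y ω := by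
      intro ω
      simp only [hY_def, hm_def, dotProduct, Finset.sum_sub_distrib, mul_sub]
    have hY2 : MemLp Y 2 P := hLm.sub (memLp_const _)
    have hcY2 : MemLp (fun ω => c + Y ω) 2 P := (memLp_const c).add hY2
    have hsq : Integrable (fun ω => (c + Y ω) ^ 2) P := hcY2.integrable_sq
    have hYint : Integrable Y P := hY2.integrable one_le_two
    have hYzero : ∫ ω, Y ω ∂P = 0 := by
      have hlin : ∫ ω, γ ⬝ᵥ π ω ∂P = γ ⬝ᵥ m := by
        simp only [dotProduct]
        rw [integral_finset_sum _ fun i _ => (hint i).const_mul _]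
        exact Finset.sum_congr rfl fun i _ => by
          rw [integral_const_mul]
      simp only [hY_def]
      rw [integral_sub hL (integrable_const _), hlin, integral_const, probReal_univ, one_smul, sub_self]
    -- split the integral
    have hsplit : ∫ ω, (μ * (π ω ⬝ᵥ (S *ᵥ π ω)) - γ ⬝ᵥ π ω
          + μ * (c + γ ⬝ᵥ (fun i => π ω i - ∫ ω', π ω' i ∂P)) ^ 2) ∂P
        = (∫ ω, (μ * (π ω ⬝ᵥ (S *ᵥ π ω)) - γ ⬝ᵥ π ω) ∂P)
          + μ * ∫ ω, (c + Y ω) ^ 2 ∂P := by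
      have hA : Integrable (fun ω => μ * (π ω ⬝ᵥ (S *ᵥ π ω)) - γ ⬝ᵥ π ω) P := by
        exact (hQ.const_mul μ).sub hL
      have hB : Integrable (fun ω => μ * (c + Y ω) ^ 2) P := hsq.const_mul μ
      have hstep : ∫ ω, (μ * (π ω ⬝ᵥ (S *ᵥ π ω)) - γ ⬝ᵥ π ω
            + μ * (c + γ ⬝ᵥ (fun i => π ω i - ∫ ω', π ω' i ∂P)) ^ 2) ∂P
          = ∫ ω, ((μ * (π ω ⬝ᵥ (S *ᵥ π ω)) - γ ⬝ᵥ π ω) + μ * (c + Y ω) ^ 2) ∂P := by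
        refine integral_congr_ae (Filter.Eventually.of_forall fun ω => ?_)
        simp only [hYrw ω]
      rw [hstep, integral_add hA hB, integral_const_mul]
    rw [hsplit]
    have h1 : - (γ ⬝ᵥ (S⁻¹ *ᵥ γ) / (4 * μ)) ≤ ∫ ω, (μ * (π ω ⬝ᵥ (S *ᵥ π ω)) - γ ⬝ᵥ π ω) ∂P := by
      have := integral_mono (integrable_const (- (γ ⬝ᵥ (S⁻¹ *ᵥ γ) / (4 * μ))))
        ((hQ.const_mul μ).sub hL) (fun ω => quad_lb hS γ hμ (π ω))
      simpa [measure_univ] using this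
    have h2 : c ^ 2 ≤ ∫ ω, (c + Y ω) ^ 2 ∂P := by
      have hexp : ∫ ω, (c + Y ω) ^ 2 ∂P
          = c ^ 2 + 2 * c * (∫ ω, Y ω ∂P) + ∫ ω, Y ω ^ 2 ∂P := by
        have heq : ∀ ω, (c + Y ω) ^ 2 = c ^ 2 + (2 * c) * Y ω + Y ω ^ 2 := fun ω => by ring
        simp only [heq]
        have hA : Integrable (fun ω => c ^ 2 + 2 * c * Y ω) P := by
          exact (integrable_const _).add (hYint.const_mul _)
        have hB : Integrable (fun ω => 2 * c * Y ω) P := hYint.const_mul _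
        rw [integral_add hA hY2.integrable_sq, integral_add (integrable_const _) hB,
          integral_const, probReal_univ, one_smul, integral_const_mul]
      rw [hexp, hYzero]
      have : 0 ≤ ∫ ω, Y ω ^ 2 ∂P := integral_nonneg fun ω => sq_nonneg _
      linarith
    have h2' : μ * c ^ 2 ≤ μ * ∫ ω, (c + Y ω) ^ 2 ∂P :=
      mul_le_mul_of_nonneg_left h2 hμ.le
    linarith
  · have hSp : S *ᵥ ((1 / (2 * μ)) • (S⁻¹ *ᵥ γ)) = (1 / (2 * μ)) • γ := by
      rw [mulVec_smul, hu]
    simp only [integral_const, probReal_univ, one_smul, sub_self]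
    have hz : (fun _ : Fin n => (0:ℝ)) = (0 : Fin n → ℝ) := rfl
    rw [hz, dotProduct_zero, add_zero, hSp, dotProduct_smul, smul_dotProduct,
      dotProduct_smul, smul_eq_mul, smul_eq_mul, smul_eq_mul,
      dotProduct_comm (S⁻¹ *ᵥ γ) γ]
    field_simp
    ring
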